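/- Let ρ, c, k, ℓ, γ, D∞, h₀ be positive reals, α = k/(ρc), 0 < ε < 1, and ξ > 0. Define T(x,t) = -(h₀D∞√(πα)/k) · erf(ξ)/(1 + (h₀√(πα)/k)·erf(ξ)) · [1 - erf(x/(2√(αt)))/erf(ξ)], s(t) = 2ξ√(αt), μ = ξ + (γk/(2D∞h₀√α)) · exp(ξ²) · [1 + (h₀√(πα)/k)·erf(ξ)], r(t) = 2μ√(αt), F(x) = exp(-x²) / (k/(h₀√(πα)) + erf(x)) and G(x) = x + (γ(1-ε)√π/(2D∞)) · (1/F(x)). Then the Stefan condition k T_x(s(t), t) = ρℓ[ε s'(t) + (1-ε) r'(t)] holds for all t > 0 if and only if ξ satisfies (D∞c/(ℓ√π)) F(ξ) = G(ξ). -/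

import Mathlib

open Real Filter Set Topology

/-- The error function `erf x = (2/√π) ∫₀ˣ exp(-t²) dt`. -/
noncomputable def erf (x : ℝ) : ℝ := (2 / Real.sqrt π) * ∫ t in (0:ℝ)..x, Real.exp (-t ^ 2)

lemma hasDerivAt_erf (x : ℝ) : HasDerivAt erf (2 / Real.sqrt π * Real.exp (-x ^ 2)) x := by
  have hc : Continuous fun t : ℝ => Real.exp (-t ^ 2) := by continuity
  exact ((hc.integral_hasStrictDerivAt 0 x).hasDerivAt).const_mul (2 / Real.sqrt π)

lemma erf_pos {x : ℝ} (hx : 0 < x) : 0 < erf x := by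
  have h : 0 < ∫ t in (0:ℝ)..x, Real.exp (-t ^ 2) := by
    apply intervalIntegral.intervalIntegral_pos_of_pos
    · exact (by continuity : Continuous fun t : ℝ => Real.exp (-t ^ 2)).intervalIntegrable 0 x
    · intro t; positivity
    · exact hx
  have h2 : 0 < 2 / Real.sqrt π := by positivity
  exact mul_pos h2 h


/-- For the explicit solution with convective boundary condition, the Stefan condition
`k T_x(s(t),t) = ρℓ[ε s'(t) + (1-ε) r'(t)]` holds for all `t > 0` iff the coefficient
`ξ` satisfies the transcendental equation `(D∞ c/(ℓ√π)) F(ξ) = G(ξ)`. -/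
theorem stmt_5 (ρ c k ℓ γ Dinf h₀ ε α ξ μ : ℝ)
    (hρ : 0 < ρ) (hc : 0 < c) (hk : 0 < k) (hℓ : 0 < ℓ) (hγ : 0 < γ)
    (hD : 0 < Dinf) (hh : 0 < h₀) (hα : α = k / (ρ * c)) (hε0 : 0 < ε) (hε1 : ε < 1)
    (hξ : 0 < ξ)
    (T : ℝ → ℝ → ℝ) (s r : ℝ → ℝ) (F G : ℝ → ℝ)
    (hT : ∀ x t, T x t =
      -(h₀ * Dinf * Real.sqrt (π * α) / k) *
        (erf ξ / (1 + (h₀ * Real.sqrt (π * α) / k) * erf ξ)) *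
        (1 - erf (x / (2 * Real.sqrt (α * t))) / erf ξ))
    (hs : ∀ t, s t = 2 * ξ * Real.sqrt (α * t))
    (hμ : μ = ξ + (γ * k / (2 * Dinf * h₀ * Real.sqrt α)) * Real.exp (ξ ^ 2) *
      (1 + (h₀ * Real.sqrt (π * α) / k) * erf ξ))
    (hr : ∀ t, r t = 2 * μ * Real.sqrt (α * t))
    (hF : ∀ x, F x = Real.exp (-x ^ 2) / (k / (h₀ * Real.sqrt (π * α)) + erf x))
    (hG : ∀ x, G x = x + (γ * (1 - ε) * Real.sqrt π / (2 * Dinf)) * (1 / F x)) :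
    (∀ t > (0:ℝ), k * deriv (fun y => T y t) (s t) =
        ρ * ℓ * (ε * deriv s t + (1 - ε) * deriv r t)) ↔
      (Dinf * c / (ℓ * Real.sqrt π)) * F ξ = G ξ := by
  have hα0 : 0 < α := by rw [hα]; positivity
  have hπ0 : (0:ℝ) < π := Real.pi_pos
  have hsπ : 0 < Real.sqrt π := Real.sqrt_pos.mpr hπ0
  have hsα : 0 < Real.sqrt α := Real.sqrt_pos.mpr hα0
  have hsπα : Real.sqrt (π * α) = Real.sqrt π * Real.sqrt α := Real.sqrt_mul hπ0.le α
  have he : 0 < erf ξ := erf_pos hξ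
  have hBe : 0 < 1 + h₀ * Real.sqrt (π * α) / k * erf ξ := by
    have : 0 < h₀ * Real.sqrt (π * α) / k * erf ξ := by rw [hsπα]; positivity
    linarith
  have hden : 0 < k / (h₀ * Real.sqrt (π * α)) + erf ξ := by
    have : 0 < k / (h₀ * Real.sqrt (π * α)) := by rw [hsπα]; positivity
    linarith
  have hFξ : 0 < F ξ := by rw [hF]; positivity
  have hexp : Real.exp (-ξ ^ 2) ≠ 0 := Real.exp_ne_zero _
  have hE : Real.exp (ξ ^ 2) = (Real.exp (-ξ ^ 2))⁻¹ := by
    rw [← Real.exp_neg, neg_neg]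
  have hak : α * (ρ * c) = k := by rw [hα]; field_simp
  have hGμ : G ξ = ε * ξ + (1 - ε) * μ := by
    rw [hG, hF, hμ, hE]
    simp only [hsπα]
    field_simp
    ring
  have hds : ∀ t > (0:ℝ), deriv s t = ξ * α / Real.sqrt (α * t) := by
    intro t ht
    have hat : 0 < α * t := mul_pos hα0 ht
    have han : Real.sqrt (α * t) ≠ 0 := (Real.sqrt_pos.mpr hat).ne'
    have h1 : HasDerivAt (fun u : ℝ => α * u) α t := by
      simpa using (hasDerivAt_id t).const_mul α
    have h2 : HasDerivAt (fun u : ℝ => Real.sqrt (α * u)) (1 / (2 * Real.sqrt (α * t)) * α) t :=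
      (Real.hasDerivAt_sqrt hat.ne').comp t h1
    have h3 : HasDerivAt s (2 * ξ * (1 / (2 * Real.sqrt (α * t)) * α)) t := by
      have : s = fun u => 2 * ξ * Real.sqrt (α * u) := funext hs
      rw [this]; exact h2.const_mul _
    rw [h3.deriv, eq_div_iff han]
    field_simp
  have hdr : ∀ t > (0:ℝ), deriv r t = μ * α / Real.sqrt (α * t) := by
    intro t ht
    have hat : 0 < α * t := mul_pos hα0 ht
    have han : Real.sqrt (α * t) ≠ 0 := (Real.sqrt_pos.mpr hat).ne'
    have h1 : HasDerivAt (fun u : ℝ => α * u) α t := by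
      simpa using (hasDerivAt_id t).const_mul α
    have h2 : HasDerivAt (fun u : ℝ => Real.sqrt (α * u)) (1 / (2 * Real.sqrt (α * t)) * α) t :=
      (Real.hasDerivAt_sqrt hat.ne').comp t h1
    have h3 : HasDerivAt r (2 * μ * (1 / (2 * Real.sqrt (α * t)) * α)) t := by
      have : r = fun u => 2 * μ * Real.sqrt (α * u) := funext hr
      rw [this]; exact h2.const_mul _
    rw [h3.deriv, eq_div_iff han]
    field_simp
  have hdT : ∀ t > (0:ℝ), k * deriv (fun y => T y t) (s t)
      = Dinf * k * F ξ / (Real.sqrt π * Real.sqrt (α * t)) := by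
    intro t ht
    have hat : 0 < α * t := mul_pos hα0 ht
    have ha : 0 < Real.sqrt (α * t) := Real.sqrt_pos.mpr hat
    set a := Real.sqrt (α * t) with ha_def
    set C := -(h₀ * Dinf * Real.sqrt (π * α) / k) *
        (erf ξ / (1 + h₀ * Real.sqrt (π * α) / k * erf ξ)) with hC
    have hsta : s t / (2 * a) = ξ := by
      rw [hs]; field_simp
      rw [ha_def, Real.sqrt_mul hα0.le]
    have h1 : HasDerivAt (fun y : ℝ => y / (2 * a)) (1 / (2 * a)) (s t) := by
      simpa using (hasDerivAt_id (s t)).div_const (2 * a)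
    have h2 : HasDerivAt (fun y : ℝ => erf (y / (2 * a)))
        (2 / Real.sqrt π * Real.exp (-ξ ^ 2) * (1 / (2 * a))) (s t) := by
      have := (hasDerivAt_erf (s t / (2 * a))).comp (s t) h1
      rwa [hsta] at this
    have h3 : HasDerivAt (fun y : ℝ => C * (1 - erf (y / (2 * a)) / erf ξ))
        (C * (-(2 / Real.sqrt π * Real.exp (-ξ ^ 2) * (1 / (2 * a)) / erf ξ))) (s t) :=
      (((h2.div_const (erf ξ)).const_sub 1).const_mul C)
    have hfun : (fun y => T y t) = fun y : ℝ => C * (1 - erf (y / (2 * a)) / erf ξ) := by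
      funext y; rw [hT]
    rw [hfun, h3.deriv, hC, hF]
    simp only [hsπα]
    rw [show a = Real.sqrt α * Real.sqrt t from by rw [ha_def, Real.sqrt_mul hα0.le]]
    have hst : Real.sqrt t ≠ 0 := (Real.sqrt_pos.mpr ht).ne'
    field_simp
  have key : ∀ t > (0:ℝ), (k * deriv (fun y => T y t) (s t) =
        ρ * ℓ * (ε * deriv s t + (1 - ε) * deriv r t)) ↔
      (Dinf * c / (ℓ * Real.sqrt π)) * F ξ = G ξ := by
    intro t ht
    have hat : 0 < α * t := mul_pos hα0 ht
    have ha : 0 < Real.sqrt (α * t) := Real.sqrt_pos.mpr hat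
    rw [hdT t ht, hds t ht, hdr t ht, hGμ]
    have hm : ℓ * k / (c * Real.sqrt (α * t)) ≠ 0 := by positivity
    have e1 : Dinf * k * F ξ / (Real.sqrt π * Real.sqrt (α * t))
        = (Dinf * c / (ℓ * Real.sqrt π) * F ξ) * (ℓ * k / (c * Real.sqrt (α * t))) := by
      field_simp
    have e2 : ρ * ℓ * (ε * (ξ * α / Real.sqrt (α * t)) + (1 - ε) * (μ * α / Real.sqrt (α * t)))
        = (ε * ξ + (1 - ε) * μ) * (ℓ * k / (c * Real.sqrt (α * t))) := by
      rw [show Real.sqrt (α * t) = Real.sqrt α * Real.sqrt t from Real.sqrt_mul hα0.le t]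
      have hst : Real.sqrt t ≠ 0 := (Real.sqrt_pos.mpr ht).ne'
      field_simp
      linear_combination (ε * ξ + μ - ε * μ) * hak
    rw [e1, e2, mul_left_inj' hm]
  constructor
  · intro H; exact (key 1 one_pos).mp (H 1 one_pos)
  · intro H t ht; exact (key t ht).mpr H
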